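/- For k ≥ 4, let ℓ be the greatest odd integer at most (√(8k−7)+1)/2, and let G be the graph formed by two disjoint copies H_1, H_2 of K_ℓ together with a perfect matching joining corresponding vertices. Let S = E(H_1) ∪ {e} for an arbitrary edge e of H_2. Then |S| ≤ k, S contains no odd edge cut of G, and no circuit of G contains all edges of S. -/

import Mathlib

open SimpleGraph

/-- The edge boundary (cut) `∂A` of a vertex set `A` in a graph `G`. -/
def edgeCut {V : Type*} (G : SimpleGraph V) (A : Set V) : Set (Sym2 V) :=
  {e | ∃ u v, G.Adj u v ∧ u ∈ A ∧ v ∉ A ∧ e = s(u, v)}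

/-- Two disjoint copies of `K_ℓ` joined by a perfect matching between corresponding
vertices. -/
def twoCliques (ℓ : ℕ) : SimpleGraph (Fin 2 × Fin ℓ) :=
  SimpleGraph.fromRel fun p q => (p.1 = q.1 ∧ p.2 ≠ q.2) ∨ (p.1 ≠ q.1 ∧ p.2 = q.2)

/-- The edge set `S = E(H_1) ∪ {e}`: all edges of the first clique together with one
edge `e = v_{2,x₀} v_{2,y₀}` of the second clique. -/
def cliqueEdges (ℓ : ℕ) (x₀ y₀ : Fin ℓ) : Set (Sym2 (Fin 2 × Fin ℓ)) :=
  {f | ∃ u v : Fin ℓ, u ≠ v ∧ f = s(((0 : Fin 2), u), ((0 : Fin 2), v))} ∪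
    {s(((1 : Fin 2), x₀), ((1 : Fin 2), y₀))}

lemma fin2cases (a : Fin 2) : a = 0 ∨ a = 1 := by omega

lemma pair10 {ℓ : ℕ} {a b : Fin ℓ} : ((1:Fin 2), a) ≠ ((0:Fin 2), b) :=
  fun h => Fin.zero_ne_one ((congrArg Prod.fst h).symm)

lemma pair01 {ℓ : ℕ} {a b : Fin ℓ} : ((0:Fin 2), a) ≠ ((1:Fin 2), b) :=
  fun h => Fin.zero_ne_one (congrArg Prod.fst h)

lemma twoCliques_adj {ℓ : ℕ} {p q : Fin 2 × Fin ℓ} :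
    (twoCliques ℓ).Adj p q ↔ (p.1 = q.1 ∧ p.2 ≠ q.2) ∨ (p.1 ≠ q.1 ∧ p.2 = q.2) := by
  simp only [twoCliques, fromRel_adj]
  constructor
  · rintro ⟨-, (h | h) | (h | h)⟩
    · exact Or.inl h
    · exact Or.inr h
    · exact Or.inl ⟨h.1.symm, fun e => h.2 e.symm⟩
    · exact Or.inr ⟨fun e => h.1 e.symm, h.2.symm⟩
  · rintro (h | h)
    · exact ⟨fun e => h.2 (congrArg Prod.snd e), Or.inl (Or.inl h)⟩
    · exact ⟨fun e => h.1 (congrArg Prod.fst e), Or.inl (Or.inr h)⟩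

lemma walk_fst_eq {ℓ : ℕ} {x y : Fin 2 × Fin ℓ} (p : (twoCliques ℓ).Walk x y)
    (h : ∀ a b : Fin 2 × Fin ℓ, s(a, b) ∈ p.edges → a.1 = b.1) :
    ∀ v ∈ p.support, v.1 = x.1 := by
  induction p with
  | nil =>
      intro v hv
      rw [SimpleGraph.Walk.support_nil, List.mem_singleton] at hv
      rw [hv]
  | @cons a b c hab q ih =>
      intro v hv
      have hfst : a.1 = b.1 := h a b (by simp)
      rw [SimpleGraph.Walk.support_cons, List.mem_cons] at hv
      rcases hv with rfl | hv
      · rfl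
      · rw [ih (fun p q hpq => h p q (by simp [hpq])) v hv, ← hfst]

lemma no_matching_edge {ℓ : ℕ} (hodd : Odd ℓ) {x : Fin 2 × Fin ℓ}
    {c : (twoCliques ℓ).Walk x x} (ht : c.IsTrail)
    (hall : ∀ u v : Fin ℓ, u ≠ v → s(((0:Fin 2), u), ((0:Fin 2), v)) ∈ c.edges)
    (j : Fin ℓ) : s(((0:Fin 2), j), ((1:Fin 2), j)) ∉ c.edges := by
  intro hmem
  set mj : Sym2 (Fin 2 × Fin ℓ) := s(((0:Fin 2), j), ((1:Fin 2), j)) with hmj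
  set F0 : Finset (Sym2 (Fin 2 × Fin ℓ)) :=
    (Finset.univ.erase j).image (fun v => s(((0:Fin 2), j), ((0:Fin 2), v))) with hF0
  have heven : Even (c.edges.countP fun e => ((0:Fin 2), j) ∈ e) := by
    rw [ht.even_countP_edges_iff ((0:Fin 2), j)]
    intro h; exact absurd rfl h
  have hcount : (c.edges.countP fun e => ((0:Fin 2), j) ∈ e)
      = (c.edges.toFinset.filter (fun e => ((0:Fin 2), j) ∈ e)).card := by
    rw [List.countP_eq_length_filter,
      ← List.toFinset_card_of_nodup (ht.edges_nodup.filter _)]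
    congr 1
    ext e
    simp [List.mem_filter]
  set M := c.edges.toFinset.filter (fun e => ((0:Fin 2), j) ∈ e) with hM
  have key : ∀ a b : Fin 2 × Fin ℓ, (twoCliques ℓ).Adj a b → a = ((0:Fin 2), j) →
      s(a, b) ∈ insert mj F0 := by
    rintro a ⟨b1, b2⟩ hadj rfl
    rw [twoCliques_adj] at hadj
    rcases hadj with ⟨h1, h2⟩ | ⟨h1, h2⟩
    · simp only at h1 h2
      subst h1
      exact Finset.mem_insert_of_mem (Finset.mem_image.2
        ⟨b2, Finset.mem_erase.2 ⟨Ne.symm h2, Finset.mem_univ _⟩, rfl⟩)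
    · simp only at h1 h2
      subst h2
      rcases fin2cases b1 with rfl | rfl
      · exact absurd rfl h1
      · exact Finset.mem_insert_self _ _
  have hMsub : M ⊆ insert mj F0 := by
    intro e he
    induction e using Sym2.ind with
    | _ a b =>
      rw [hM, Finset.mem_filter, List.mem_toFinset] at he
      have hadj : (twoCliques ℓ).Adj a b := c.edges_subset_edgeSet he.1
      rcases Sym2.mem_iff.1 he.2 with h | h
      · exact key a b hadj h.symm
      · rw [Sym2.eq_swap]; exact key b a hadj.symm h.symm
  have hMsup : insert mj F0 ⊆ M := by
    intro e he
    rcases Finset.mem_insert.1 he with rfl | he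
    · rw [hM, Finset.mem_filter, List.mem_toFinset]
      exact ⟨hmem, by simp [hmj]⟩
    · obtain ⟨v, hv, rfl⟩ := Finset.mem_image.1 he
      rw [hM, Finset.mem_filter, List.mem_toFinset]
      exact ⟨hall j v (Ne.symm (Finset.mem_erase.1 hv).1), by simp⟩
  have hMeq : M = insert mj F0 := le_antisymm hMsub hMsup
  have hmjF0 : mj ∉ F0 := by
    rw [hF0, hmj]
    intro hcon
    obtain ⟨v, -, hv⟩ := Finset.mem_image.1 hcon
    rw [Sym2.eq_iff] at hv
    rcases hv with ⟨-, h⟩ | ⟨h, -⟩ <;> exact Fin.zero_ne_one (congrArg Prod.fst h)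
  have hinj : Set.InjOn (fun v => s(((0:Fin 2), j), ((0:Fin 2), v)))
      (Finset.univ.erase j) := by
    intro a _ b _ hab
    simp only [Sym2.eq_iff] at hab
    rcases hab with ⟨-, h⟩ | ⟨h1, h2⟩
    · exact congrArg Prod.snd h
    · exact (congrArg Prod.snd h2).trans (congrArg Prod.snd h1)
  have hcard : M.card = ℓ := by
    rw [hMeq, Finset.card_insert_of_notMem hmjF0, Finset.card_image_of_injOn hinj,
      Finset.card_erase_of_mem (Finset.mem_univ _), Finset.card_univ, Fintype.card_fin]
    obtain ⟨m, rfl⟩ := hodd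
    omega
  rw [hcount, hcard] at heven
  exact (Nat.not_even_iff_odd.2 hodd) heven

/-- The witness for `g(k) > ℓ`: for `k ≥ 4` and `ℓ` the greatest odd integer at most
`(√(8k-7)+1)/2`, in the graph of two `K_ℓ`'s joined by a matching, the set
`S = E(H_1) ∪ {e}` has at most `k` edges, contains no odd cut, but lies on no circuit. -/
theorem stmt14 (k ℓ : ℕ) (hk : 4 ≤ k) (hodd : Odd ℓ)
    (hle : (ℓ : ℝ) ≤ (Real.sqrt (8 * (k : ℝ) - 7) + 1) / 2)
    (hmax : ∀ m : ℕ, Odd m → (m : ℝ) ≤ (Real.sqrt (8 * (k : ℝ) - 7) + 1) / 2 → m ≤ ℓ)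
    (x₀ y₀ : Fin ℓ) (hxy : x₀ ≠ y₀) :
    (cliqueEdges ℓ x₀ y₀).ncard ≤ k ∧
    (¬ ∃ A : Set (Fin 2 × Fin ℓ), edgeCut (twoCliques ℓ) A ⊆ cliqueEdges ℓ x₀ y₀ ∧
        Odd (edgeCut (twoCliques ℓ) A).ncard) ∧
    ¬ ∃ (x : Fin 2 × Fin ℓ) (c : (twoCliques ℓ).Walk x x), c.IsCircuit ∧
        ∀ f ∈ cliqueEdges ℓ x₀ y₀, f ∈ c.edges := by
  have hl2 : 2 ≤ ℓ := by
    by_contra h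
    push_neg at h
    exact hxy (Fin.ext (by omega))
  have hl3 : 3 ≤ ℓ := by obtain ⟨m, rfl⟩ := hodd; omega
  refine ⟨?_, ?_, ?_⟩
  · -- Part 1 : cardinality
    have harith : ℓ * (ℓ - 1) / 2 + 1 ≤ k := by
      have h8 : (0:ℝ) ≤ 8 * (k:ℝ) - 7 := by
        have : (4:ℝ) ≤ (k:ℝ) := by exact_mod_cast hk
        linarith
      have h1 : (2 * (ℓ:ℝ) - 1) ≤ Real.sqrt (8 * (k:ℝ) - 7) := by linarith
      have h0 : (0:ℝ) ≤ 2 * (ℓ:ℝ) - 1 := by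
        have : (1:ℝ) ≤ (ℓ:ℝ) := by exact_mod_cast (by omega : 1 ≤ ℓ)
        linarith
      have h2 : (2 * (ℓ:ℝ) - 1)^2 ≤ 8 * (k:ℝ) - 7 := by
        nlinarith [Real.sq_sqrt h8, Real.sqrt_nonneg (8*(k:ℝ)-7)]
      have h3 : (4:ℝ) * ((ℓ:ℝ)*(ℓ:ℝ)) + 8 ≤ 8 * (k:ℝ) + 4 * (ℓ:ℝ) := by nlinarith [h2]
      have h4 : 4 * (ℓ * ℓ) + 8 ≤ 8 * k + 4 * ℓ := by exact_mod_cast h3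
      have h6 : ℓ * (ℓ - 1) + ℓ = ℓ * ℓ := by
        cases ℓ with
        | zero => simp
        | succ n => simp [Nat.succ_sub_one, Nat.mul_succ]
      have key : ∀ a b : ℕ, a + ℓ = b → 4*b+8 ≤ 8*k+4*ℓ → a/2+1 ≤ k := by intros; omega
      exact key _ _ h6 h4
    have hS1 : {f | ∃ u v : Fin ℓ, u ≠ v ∧ f = s(((0 : Fin 2), u), ((0 : Fin 2), v))}.ncard
        = ℓ * (ℓ - 1) / 2 := by
      have himg : {f | ∃ u v : Fin ℓ, u ≠ v ∧ f = s(((0 : Fin 2), u), ((0 : Fin 2), v))}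
          = (Sym2.map (fun v : Fin ℓ => ((0:Fin 2), v))) '' {z : Sym2 (Fin ℓ) | ¬ z.IsDiag} := by
        ext f
        constructor
        · rintro ⟨u, v, huv, rfl⟩
          exact ⟨s(u, v), by simpa using huv, by simp⟩
        · rintro ⟨z, hz, rfl⟩
          induction z using Sym2.ind with
          | _ u v => exact ⟨u, v, by simpa using hz, by simp⟩
      rw [himg, Set.ncard_image_of_injective _
        (Sym2.map.injective (fun a b h => congrArg Prod.snd h))]
      rw [← Nat.card_coe_set_eq, Nat.card_eq_fintype_card]
      have : Fintype.card {z : Sym2 (Fin ℓ) // ¬ z.IsDiag}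
          = Fintype.card ↑{z : Sym2 (Fin ℓ) | ¬ z.IsDiag} :=
        Fintype.card_congr (Equiv.subtypeEquivRight (fun _ => Iff.rfl))
      rw [← this, Sym2.card_subtype_not_diag, Fintype.card_fin, Nat.choose_two_right]
    calc (cliqueEdges ℓ x₀ y₀).ncard
        ≤ {f | ∃ u v : Fin ℓ, u ≠ v ∧ f = s(((0 : Fin 2), u), ((0 : Fin 2), v))}.ncard
          + ({s(((1 : Fin 2), x₀), ((1 : Fin 2), y₀))} : Set (Sym2 (Fin 2 × Fin ℓ))).ncard :=
          Set.ncard_union_le _ _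
      _ = ℓ * (ℓ - 1) / 2 + 1 := by rw [hS1, Set.ncard_singleton]
      _ ≤ k := harith
  · -- Part 2 : no odd cut
    rintro ⟨A, hsub, hoddcut⟩
    have hmadj : ∀ j : Fin ℓ, (twoCliques ℓ).Adj ((0:Fin 2), j) ((1:Fin 2), j) :=
      fun j => twoCliques_adj.2 (Or.inr ⟨Fin.zero_ne_one, rfl⟩)
    have hmnotS : ∀ j : Fin ℓ,
        s(((0:Fin 2), j), ((1:Fin 2), j)) ∉ cliqueEdges ℓ x₀ y₀ := by
      rintro j (⟨u, v, huv, h⟩ | h)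
      · rw [Sym2.eq_iff] at h
        rcases h with ⟨h1, h2⟩ | ⟨h1, h2⟩ <;>
          first | exact pair10 h1 | exact pair10 h2 | exact pair01 h1 | exact pair01 h2
      · rw [Set.mem_singleton_iff, Sym2.eq_iff] at h
        rcases h with ⟨h1, h2⟩ | ⟨h1, h2⟩ <;>
          first | exact pair10 h1 | exact pair10 h2 | exact pair01 h1 | exact pair01 h2
    have hmatch : ∀ j : Fin ℓ, ((0:Fin 2), j) ∈ A ↔ ((1:Fin 2), j) ∈ A := by
      intro j
      constructor
      · intro h0
        by_contra h1
        exact hmnotS j (hsub ⟨_, _, hmadj j, h0, h1, rfl⟩)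
      · intro h1
        by_contra h0
        apply hmnotS j
        have : s(((1:Fin 2), j), ((0:Fin 2), j)) ∈ edgeCut (twoCliques ℓ) A :=
          ⟨_, _, (hmadj j).symm, h1, h0, rfl⟩
        rw [Sym2.eq_swap] at this
        exact hsub this
    have hspec : ∀ u v : Fin ℓ, s(((1:Fin 2), u), ((1:Fin 2), v)) ∈ cliqueEdges ℓ x₀ y₀ →
        (u = x₀ ∧ v = y₀) ∨ (u = y₀ ∧ v = x₀) := by
      rintro u v (⟨p, q, hpq, h⟩ | h)
      · rw [Sym2.eq_iff] at h
        rcases h with ⟨h1, h2⟩ | ⟨h1, h2⟩ <;>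
          first | exact absurd h1 pair10 | exact absurd h2 pair10
                | exact absurd h1 pair01 | exact absurd h2 pair01
      · rw [Set.mem_singleton_iff, Sym2.eq_iff] at h
        rcases h with ⟨h1, h2⟩ | ⟨h1, h2⟩
        · exact Or.inl ⟨congrArg Prod.snd h1, congrArg Prod.snd h2⟩
        · exact Or.inr ⟨congrArg Prod.snd h1, congrArg Prod.snd h2⟩
    have hedge : ∀ u v : Fin ℓ, u ≠ v → ((0:Fin 2), u) ∈ A → ((0:Fin 2), v) ∉ A →
        s(((1:Fin 2), u), ((1:Fin 2), v)) ∈ edgeCut (twoCliques ℓ) A := by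
      intro u v huv hu hv
      exact ⟨((1:Fin 2), u), ((1:Fin 2), v), twoCliques_adj.2 (Or.inl ⟨rfl, huv⟩),
        (hmatch u).1 hu, fun h => hv ((hmatch v).2 h), rfl⟩
    have hB : ∀ a b : Fin ℓ, ((0:Fin 2), a) ∈ A → ((0:Fin 2), b) ∉ A → False := by
      intro a b ha hb
      have hab : a ≠ b := fun h => hb (h ▸ ha)
      obtain ⟨c, hca, hcb⟩ : ∃ c : Fin ℓ, c ≠ a ∧ c ≠ b := by
        by_contra hcon
        push_neg at hcon
        have : (Finset.univ : Finset (Fin ℓ)) ⊆ {a, b} := by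
          intro c _
          rcases Classical.em (c = a) with rfl | h
          · exact Finset.mem_insert_self _ _
          · rw [hcon c h]; exact Finset.mem_insert_of_mem (Finset.mem_singleton_self _)
        have := Finset.card_le_card this
        rw [Finset.card_univ, Fintype.card_fin] at this
        have h2 := Finset.card_insert_le a ({b} : Finset (Fin ℓ))
        rw [Finset.card_singleton] at h2
        omega
      have h1 := hspec _ _ (hsub (hedge a b hab ha hb))
      rcases Classical.em (((0:Fin 2), c) ∈ A) with hcA | hcA
      · have h2 := hspec _ _ (hsub (hedge c b hcb hcA hb))
        rcases h1 with ⟨ha1, hb1⟩ | ⟨ha1, hb1⟩ <;> rcases h2 with ⟨hc1, hb2⟩ | ⟨hc1, hb2⟩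
        · exact hca (hc1.trans ha1.symm)
        · exact hxy (hb2.symm.trans hb1)
        · exact hxy (hb1.symm.trans hb2)
        · exact hca (hc1.trans ha1.symm)
      · have h2 := hspec _ _ (hsub (hedge a c (Ne.symm hca) ha hcA))
        rcases h1 with ⟨ha1, hb1⟩ | ⟨ha1, hb1⟩ <;> rcases h2 with ⟨ha2, hc1⟩ | ⟨ha2, hc1⟩
        · exact hcb (hc1.trans hb1.symm)
        · exact hxy (ha1.symm.trans ha2)
        · exact hxy (ha2.symm.trans ha1)
        · exact hcb (hc1.trans hb1.symm)
    have hA0 : ∀ p : Fin 2 × Fin ℓ, p ∈ A → ((0:Fin 2), p.2) ∈ A := by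
      rintro ⟨p1, p2⟩ hp
      rcases fin2cases p1 with rfl | rfl
      · exact hp
      · exact (hmatch p2).2 hp
    have hA0' : ∀ p : Fin 2 × Fin ℓ, p ∉ A → ((0:Fin 2), p.2) ∉ A := by
      rintro ⟨p1, p2⟩ hp hc
      rcases fin2cases p1 with rfl | rfl
      · exact hp hc
      · exact hp ((hmatch p2).1 hc)
    have hempty : edgeCut (twoCliques ℓ) A = ∅ := by
      rw [Set.eq_empty_iff_forall_notMem]
      rintro e ⟨u, v, hadj, hu, hv, rfl⟩
      exact hB u.2 v.2 (hA0 u hu) (hA0' v hv)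
    rw [hempty, Set.ncard_empty] at hoddcut
    simp at hoddcut
  · -- Part 3 : no circuit
    rintro ⟨x, c, hc, hall⟩
    have ht : c.IsTrail := hc.isTrail
    have hallS1 : ∀ u v : Fin ℓ, u ≠ v → s(((0:Fin 2), u), ((0:Fin 2), v)) ∈ c.edges :=
      fun u v huv => hall _ (Or.inl ⟨u, v, huv, rfl⟩)
    have hnomatch := no_matching_edge hodd ht hallS1
    have h1mem : ((1:Fin 2), x₀) ∈ c.support :=
      SimpleGraph.Walk.fst_mem_support_of_mem_edges c (hall _ (Or.inr rfl))
    have h0mem : ((0:Fin 2), x₀) ∈ c.support :=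
      SimpleGraph.Walk.fst_mem_support_of_mem_edges c (hallS1 x₀ y₀ hxy)
    have hcross : ¬ ∀ a b : Fin 2 × Fin ℓ, s(a, b) ∈ c.edges → a.1 = b.1 := by
      intro h
      have h0 := walk_fst_eq c h _ h0mem
      have h1 := walk_fst_eq c h _ h1mem
      exact Fin.zero_ne_one (h0.trans h1.symm)
    push_neg at hcross
    obtain ⟨a, b, hab_mem, hab_ne⟩ := hcross
    have hadj : (twoCliques ℓ).Adj a b := c.edges_subset_edgeSet hab_mem
    rw [twoCliques_adj] at hadj
    rcases hadj with ⟨h1, -⟩ | ⟨-, h2⟩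
    · exact hab_ne h1
    obtain ⟨a1, a2⟩ := a
    obtain ⟨b1, b2⟩ := b
    simp only at h2 hab_ne
    subst h2
    rcases fin2cases a1 with rfl | rfl <;> rcases fin2cases b1 with rfl | rfl
    · exact hab_ne rfl
    · exact hnomatch a2 hab_mem
    · rw [Sym2.eq_swap] at hab_mem
      exact hnomatch a2 hab_mem
    · exact hab_ne rfl
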